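/- Let K be a self-adjoint positive contraction on L²(E,μ) that is locally trace class, and let g : E → [0,1] be measurable with √(1−g)·K·√(1−g) trace class. If 1 − √(1−g)K√(1−g) is invertible, then the operator B̃(g,K) = √g·K·(1+(g−1)K)^{−1}·√g is a self-adjoint positive contraction, i.e., 0 ≤ B̃(g,K) ≤ 1. -/

import Mathlib

set_option synthInstance.maxHeartbeats 1000000
set_option maxHeartbeats 4000000

open MeasureTheory
open scoped ENNReal

/-- The trace norm of an operator (finite iff the operator is trace class). -/
noncomputable def traceNorm {H : Type*} [NormedAddCommGroup H] [InnerProductSpace ℂ H]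
    (T : H →L[ℂ] H) : ℝ≥0∞ :=
  ⨆ (n : ℕ) (e : Fin n → H) (f : Fin n → H) (_ : Orthonormal ℂ e) (_ : Orthonormal ℂ f),
    ∑ i, (‖(inner ℂ (e i) (T (f i)) : ℂ)‖₊ : ℝ≥0∞)

/-- A multiplication operator by a real-valued function is self-adjoint. -/
private lemma mulop_selfAdjoint {E : Type*} [MeasurableSpace E] {μ : Measure E}
    (c : E → ℝ) (S : Lp ℂ 2 μ →L[ℂ] Lp ℂ 2 μ)
    (hS : ∀ f : Lp ℂ 2 μ, (S f : E → ℂ) =ᵐ[μ] fun x => (c x : ℂ) * f x) :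
    IsSelfAdjoint S := by
  rw [ContinuousLinearMap.isSelfAdjoint_iff']
  symm
  rw [ContinuousLinearMap.eq_adjoint_iff]
  intro f h
  rw [L2.inner_def, L2.inner_def]
  refine integral_congr_ae ?_
  filter_upwards [hS f, hS h] with x hx hx'
  simp only [hx, hx', RCLike.inner_apply, map_mul, Complex.conj_ofReal]
  ring

/-- Existence of a nonnegative square root of a nonnegative operator. -/
private lemma exists_sqrt_op {H : Type*} [NormedAddCommGroup H] [InnerProductSpace ℂ H]
    [CompleteSpace H] (K : H →L[ℂ] H) (hK : 0 ≤ K) : ∃ P : H →L[ℂ] H, P * P = K ∧ 0 ≤ P :=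
  ⟨CFC.sqrt K, CFC.sqrt_mul_sqrt_self K hK, CFC.sqrt_nonneg K⟩

/-- If `1 - a * b` is a unit, so is `1 - b * a`. -/
private lemma isUnit_one_sub_swap {R : Type*} [Ring R] {a b : R} (h : IsUnit (1 - a * b)) :
    IsUnit (1 - b * a) := by
  obtain ⟨u, hu⟩ := h
  have h1 : (1 - a * b) * ↑u⁻¹ = 1 := by rw [← hu]; exact u.mul_inv
  have h2 : (↑u⁻¹ : R) * (1 - a * b) = 1 := by rw [← hu]; exact u.inv_mul
  refine ⟨⟨1 - b * a, 1 + b * ↑u⁻¹ * a, ?_, ?_⟩, rfl⟩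
  · calc (1 - b * a) * (1 + b * ↑u⁻¹ * a)
        = 1 - b * a + b * ((1 - a * b) * ↑u⁻¹) * a := by noncomm_ring
      _ = 1 := by rw [h1]; noncomm_ring
  · calc (1 + b * ↑u⁻¹ * a) * (1 - b * a)
        = 1 - b * a + b * (↑u⁻¹ * (1 - a * b)) * a := by noncomm_ring
      _ = 1 := by rw [h2]; noncomm_ring

/-- Let `K` be a self-adjoint positive contraction on `L²(E,μ)`, locally of trace class,
and `g : E → [0,1]` measurable with `√(1-g) K √(1-g)` trace class and
`1 - √(1-g) K √(1-g)` invertible. Then `B̃(g,K) = √g K (1+(g-1)K)⁻¹ √g` is a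
self-adjoint positive contraction, i.e. `0 ≤ B̃(g,K) ≤ 1`. -/
theorem Btilde_positive_contraction {E : Type*} [MetricSpace E] [MeasurableSpace E]
    (μ : Measure E)
    (K : Lp ℂ 2 μ →L[ℂ] Lp ℂ 2 μ)
    (hKpos : K.IsPositive) (hKcontr : ((1 : Lp ℂ 2 μ →L[ℂ] Lp ℂ 2 μ) - K).IsPositive)
    (chi : Set E → (Lp ℂ 2 μ →L[ℂ] Lp ℂ 2 μ))
    (hchi : ∀ B : Set E, ∀ f : Lp ℂ 2 μ, (chi B f : E → ℂ) =ᵐ[μ] B.indicator f)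
    (hKloc : ∀ B : Set E, Bornology.IsBounded B → MeasurableSet B →
      traceNorm (chi B ∘L K ∘L chi B) < ⊤)
    (g : E → ℝ) (hgmeas : Measurable g) (hg : ∀ x, 0 ≤ g x ∧ g x ≤ 1)
    (Sg S1g T : Lp ℂ 2 μ →L[ℂ] Lp ℂ 2 μ)
    (hSg : ∀ f : Lp ℂ 2 μ, (Sg f : E → ℂ) =ᵐ[μ] fun x => (Real.sqrt (g x) : ℂ) * f x)
    (hS1g : ∀ f : Lp ℂ 2 μ, (S1g f : E → ℂ) =ᵐ[μ] fun x => (Real.sqrt (1 - g x) : ℂ) * f x)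
    (hT : ∀ f : Lp ℂ 2 μ, (T f : E → ℂ) =ᵐ[μ] fun x => ((g x : ℂ) - 1) * f x)
    (htrace : traceNorm (S1g ∘L K ∘L S1g) < ⊤)
    (hinv1 : IsUnit ((1 : Lp ℂ 2 μ →L[ℂ] Lp ℂ 2 μ) - S1g ∘L K ∘L S1g))
    (hinv2 : IsUnit (1 + T ∘L K)) :
    let B := Sg ∘L K ∘L Ring.inverse (1 + T ∘L K) ∘L Sg
    B.IsPositive ∧ ((1 : Lp ℂ 2 μ →L[ℂ] Lp ℂ 2 μ) - B).IsPositive := by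
  intro B
  have hSg_sa : IsSelfAdjoint Sg := mulop_selfAdjoint (fun x => Real.sqrt (g x)) Sg hSg
  have hS1g_sa : IsSelfAdjoint S1g := mulop_selfAdjoint (fun x => Real.sqrt (1 - g x)) S1g hS1g
  have hK0 : (0 : Lp ℂ 2 μ →L[ℂ] Lp ℂ 2 μ) ≤ K :=
    (ContinuousLinearMap.nonneg_iff_isPositive K).mpr hKpos
  have h1K : (0 : Lp ℂ 2 μ →L[ℂ] Lp ℂ 2 μ) ≤ 1 - K :=
    (ContinuousLinearMap.nonneg_iff_isPositive _).mpr hKcontr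
  -- Sg² + S1g² = 1
  have hsum : Sg * Sg + S1g * S1g = 1 := by
    ext f
    simp only [ContinuousLinearMap.add_apply, ContinuousLinearMap.mul_apply,
      ContinuousLinearMap.one_apply]
    filter_upwards [hSg (Sg f), hSg f, hS1g (S1g f), hS1g f,
      Lp.coeFn_add (Sg (Sg f)) (S1g (S1g f))] with x hx1 hx2 hx3 hx4 hxa
    rw [hxa, Pi.add_apply, hx1, hx3, hx2, hx4]
    have hg0 := (hg x).1
    have hg1 := (hg x).2
    rw [← mul_assoc, ← mul_assoc, ← Complex.ofReal_mul, ← Complex.ofReal_mul,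
      Real.mul_self_sqrt hg0, Real.mul_self_sqrt (by linarith), ← add_mul,
      ← Complex.ofReal_add]
    norm_num
  have hgg : Sg * Sg = 1 - S1g * S1g := by rw [← hsum]; noncomm_ring
  -- 1 + T K = 1 - S1g² K
  have hTeq : (1 : Lp ℂ 2 μ →L[ℂ] Lp ℂ 2 μ) + T ∘L K = 1 - S1g * S1g * K := by
    have hT' : T = -(S1g * S1g) := by
      ext f
      simp only [ContinuousLinearMap.mul_apply, ContinuousLinearMap.neg_apply]
      filter_upwards [hS1g (S1g f), hS1g f, hT f, Lp.coeFn_neg (S1g (S1g f))]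
        with x hx3 hx4 hx5 hxn
      rw [hx5, hxn, Pi.neg_apply, hx3, hx4, ← mul_assoc, ← Complex.ofReal_mul,
        Real.mul_self_sqrt (by linarith [(hg x).2])]
      push_cast
      ring
    have : T ∘L K = T * K := rfl
    rw [this, hT']
    noncomm_ring
  have hMu : IsUnit ((1 : Lp ℂ 2 μ →L[ℂ] Lp ℂ 2 μ) - S1g * S1g * K) := hTeq ▸ hinv2
  -- the square root of K
  obtain ⟨P, hPP, hP0⟩ := exists_sqrt_op K hK0
  have hPsa : IsSelfAdjoint P := .of_nonneg hP0
  -- N = 1 - P S1g² P is a unit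
  have hNu : IsUnit ((1 : Lp ℂ 2 μ →L[ℂ] Lp ℂ 2 μ) - P * (S1g * S1g) * P) := by
    have he : (1 : Lp ℂ 2 μ →L[ℂ] Lp ℂ 2 μ) - S1g * S1g * K = 1 - (S1g * S1g * P) * P := by
      rw [← hPP]; noncomm_ring
    have := isUnit_one_sub_swap (he ▸ hMu)
    simpa [mul_assoc] using this
  -- N is self-adjoint and nonnegative
  have hNsa : IsSelfAdjoint ((1 : Lp ℂ 2 μ →L[ℂ] Lp ℂ 2 μ) - P * (S1g * S1g) * P) := by
    simp only [IsSelfAdjoint, star_sub, star_one, star_mul, hPsa.star_eq, hS1g_sa.star_eq,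
      mul_assoc]
  have hKA : K - P * (S1g * S1g) * P = star (Sg * P) * (Sg * P) := by
    rw [star_mul, hPsa.star_eq, hSg_sa.star_eq]
    have : P * Sg * (Sg * P) = P * (Sg * Sg) * P := by noncomm_ring
    rw [this, hgg, ← hPP]
    noncomm_ring
  have hN0 : (0 : Lp ℂ 2 μ →L[ℂ] Lp ℂ 2 μ) ≤ 1 - P * (S1g * S1g) * P := by
    have hsplit : (1 : Lp ℂ 2 μ →L[ℂ] Lp ℂ 2 μ) - P * (S1g * S1g) * P
        = (1 - K) + (K - P * (S1g * S1g) * P) := by noncomm_ring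
    rw [hsplit, hKA]
    exact add_nonneg h1K (star_mul_self_nonneg _)
  -- intertwining: P * inverse(1 - S1g² K) = inverse N * P
  set N : Lp ℂ 2 μ →L[ℂ] Lp ℂ 2 μ := 1 - P * (S1g * S1g) * P with hNdef
  set D : Lp ℂ 2 μ →L[ℂ] Lp ℂ 2 μ := Ring.inverse N with hDdef
  have hND : N * D = 1 := Ring.mul_inverse_cancel N hNu
  have hDN : D * N = 1 := Ring.inverse_mul_cancel N hNu
  have hPM : P * (1 - S1g * S1g * K) = N * P := by rw [hNdef, ← hPP]; noncomm_ring
  have hMinv : (1 - S1g * S1g * K) * Ring.inverse (1 - S1g * S1g * K) = 1 :=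
    Ring.mul_inverse_cancel _ hMu
  have hinvPM : P * Ring.inverse (1 - S1g * S1g * K) = D * P := by
    have e1 : N * (P * Ring.inverse (1 - S1g * S1g * K)) = P := by
      rw [← mul_assoc N P, ← hPM, mul_assoc P, hMinv, mul_one]
    calc P * Ring.inverse (1 - S1g * S1g * K)
        = (D * N) * (P * Ring.inverse (1 - S1g * S1g * K)) := by rw [hDN, one_mul]
      _ = D * (N * (P * Ring.inverse (1 - S1g * S1g * K))) := by rw [mul_assoc D N]
      _ = D * P := by rw [e1]
  -- B = Sg P D P Sg
  have hBeq : B = Sg * P * D * (P * Sg) := by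
    show Sg * (K * (Ring.inverse (1 + T ∘L K) * Sg)) = _
    rw [hTeq]
    nth_rewrite 1 [← hPP]
    have h' : P * P * (Ring.inverse (1 - S1g * S1g * K) * Sg)
        = P * (P * Ring.inverse (1 - S1g * S1g * K)) * Sg := by noncomm_ring
    rw [h', hinvPM]
    noncomm_ring
  -- the square root R of N
  obtain ⟨R, hRR, hR0⟩ := exists_sqrt_op N hN0
  have hRsa : IsSelfAdjoint R := .of_nonneg hR0
  have hDsa : IsSelfAdjoint D := by
    rw [IsSelfAdjoint, hDdef, ← Ring.inverse_star, hNsa.star_eq]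
  have hRRD : R * (R * D) = 1 := by rw [← mul_assoc, hRR, hND]
  have hcomm : D * R = R * D := by
    calc D * R = D * R * (R * (R * D)) := by rw [hRRD, mul_one]
      _ = D * (R * R) * (R * D) := by noncomm_ring
      _ = D * N * (R * D) := by rw [hRR]
      _ = R * D := by rw [hDN, one_mul]
  have hYsa : IsSelfAdjoint (R * D) := by
    rw [IsSelfAdjoint, star_mul, hDsa.star_eq, hRsa.star_eq, hcomm]
  have hYY : (R * D) * (R * D) = D := by
    calc (R * D) * (R * D) = R * (D * R) * D := by noncomm_ring
      _ = R * (R * D) * D := by rw [hcomm]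
      _ = (R * R) * (D * D) := by noncomm_ring
      _ = N * (D * D) := by rw [hRR]
      _ = D := by rw [← mul_assoc, hND, one_mul]
  -- B = star C0 * C0
  set C0 : Lp ℂ 2 μ →L[ℂ] Lp ℂ 2 μ := (R * D) * (P * Sg) with hC0
  have hC0star : star C0 = (Sg * P) * (R * D) := by
    rw [hC0]
    simp only [star_mul, hPsa.star_eq, hSg_sa.star_eq, hDsa.star_eq, hRsa.star_eq]
    rw [hcomm]
  have hBC : B = star C0 * C0 := by
    have hrhs : star C0 * C0 = Sg * P * ((R * D) * (R * D)) * (P * Sg) := by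
      rw [hC0star, hC0]; noncomm_ring
    rw [hrhs, hYY]
    exact hBeq
  have hB0 : (0 : Lp ℂ 2 μ →L[ℂ] Lp ℂ 2 μ) ≤ B := by
    rw [hBC]; exact star_mul_self_nonneg C0
  refine ⟨(ContinuousLinearMap.nonneg_iff_isPositive B).mp hB0, ?_⟩
  -- contraction
  have hCsC : C0 * star C0 = (R * D) * (K - P * (S1g * S1g) * P) * (R * D) := by
    rw [hC0, hC0star, hKA, star_mul, hPsa.star_eq, hSg_sa.star_eq]
    noncomm_ring
  have hNe : (R * D) * N * (R * D) = 1 := by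
    calc (R * D) * N * (R * D) = R * (D * N) * (R * D) := by noncomm_ring
      _ = R * (R * D) := by rw [hDN]; noncomm_ring
      _ = 1 := hRRD
  have hone : (1 : Lp ℂ 2 μ →L[ℂ] Lp ℂ 2 μ) - C0 * star C0 = (R * D) * (1 - K) * (R * D) := by
    have expand : (R * D) * (1 - K) * (R * D)
        = (R * D) * N * (R * D) - (R * D) * (K - P * (S1g * S1g) * P) * (R * D) := by
      rw [hNdef]; noncomm_ring
    rw [expand, hNe, ← hCsC]
  have hCs0 : (0 : Lp ℂ 2 μ →L[ℂ] Lp ℂ 2 μ) ≤ C0 * star C0 := mul_star_self_nonneg C0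
  have hCs1 : C0 * star C0 ≤ 1 := by
    have h := star_left_conjugate_nonneg h1K (R * D)
    rw [hYsa.star_eq] at h
    rw [← sub_nonneg, hone]
    exact h
  have hnormC : ‖C0‖ * ‖C0‖ ≤ 1 := by
    rw [← CStarRing.norm_self_mul_star (x := C0)]
    exact (CStarAlgebra.norm_le_one_iff_of_nonneg _ hCs0).mpr hCs1
  have hB1 : B ≤ 1 := by
    rw [← CStarAlgebra.norm_le_one_iff_of_nonneg B hB0, hBC,
      CStarRing.norm_star_mul_self (x := C0)]
    exact hnormC
  exact (ContinuousLinearMap.le_def B 1).mp hB1
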